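/- For every real constant κ there exist finite sets X, Y, Z, a probability distribution P on X×Y×Z, and a classical channel R from Y to Y×Z satisfying R(P_Y) = P_YZ, such that κ · D_max( (id⊗R)(P_XY) ‖ P ) < I(X:Z|Y)_P (the max-relative entropy taken with the reconstructed state in the first argument). -/

import Mathlib

noncomputable section

namespace CIT

/-- A probability distribution on a finite set. -/
def IsDist {X : Type*} [Fintype X] (p : X → ℝ) : Prop :=
  (∀ x, 0 ≤ p x) ∧ ∑ x, p x = 1

/-- Support inclusion `supp p ⊆ supp q`. -/
def suppLe {X : Type*} (p q : X → ℝ) : Prop := ∀ x, p x ≠ 0 → q x ≠ 0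

open Classical in
/-- Relative entropy (base 2), with `0·log 0 = 0`, `+∞` if the support
condition fails. -/
def relEnt {X : Type*} [Fintype X] (p q : X → ℝ) : EReal :=
  if suppLe p q then ((∑ x, p x * Real.logb 2 (p x / q x) : ℝ) : EReal) else ⊤

open Classical in
/-- Max-relative entropy `D_max(p‖q) = log max_{x ∈ supp p} p(x)/q(x)`,
`+∞` if the support condition fails. -/
def dMax {X : Type*} [Fintype X] (p q : X → ℝ) : EReal :=
  if suppLe p q then
    ((Real.logb 2 (sSup {r : ℝ | ∃ x, p x ≠ 0 ∧ r = p x / q x}) : ℝ) : EReal)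
  else ⊤

open Classical in
/-- Rényi relative entropy of order `α` (base 2), with `D_1 := D` and `+∞`
when `α > 1` and the support condition fails. -/
def renyi {X : Type*} [Fintype X] (α : ℝ) (p q : X → ℝ) : EReal :=
  if α = 1 then relEnt p q
  else if 1 < α ∧ ¬ suppLe p q then ⊤
  else (((α - 1)⁻¹ * Real.logb 2 (∑ x, p x ^ α * q x ^ (1 - α)) : ℝ) : EReal)

/-- The `XY`-marginal of a tripartite distribution. -/
def margXY {X Y Z : Type*} [Fintype Z] (P : X × Y × Z → ℝ) : X × Y → ℝ :=
  fun t => ∑ z, P (t.1, t.2, z)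

/-- The `YZ`-marginal of a tripartite distribution. -/
def margYZ {X Y Z : Type*} [Fintype X] (P : X × Y × Z → ℝ) : Y × Z → ℝ :=
  fun t => ∑ x, P (x, t.1, t.2)

/-- The `Y`-marginal of a tripartite distribution. -/
def margY {X Y Z : Type*} [Fintype X] [Fintype Z] (P : X × Y × Z → ℝ) : Y → ℝ :=
  fun y => ∑ x, ∑ z, P (x, y, z)

/-- Conditional mutual information
`I(X:Z|Y)_P = Σ P(x,y,z) log( P(x,y,z)·P_Y(y) / (P_XY(x,y)·P_YZ(y,z)) )`. -/
def cmi {X Y Z : Type*} [Fintype X] [Fintype Y] [Fintype Z] (P : X × Y × Z → ℝ) : ℝ :=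
  ∑ s : X × Y × Z,
    P s * Real.logb 2 (P s * margY P s.2.1 / (margXY P (s.1, s.2.1) * margYZ P (s.2.1, s.2.2)))

/-- A classical channel from `Y` to `W`: a family of conditional distributions. -/
def IsChannel {Y W : Type*} [Fintype W] (R : Y → W → ℝ) : Prop :=
  ∀ y, (∀ w, 0 ≤ R y w) ∧ ∑ w, R y w = 1

/-- Action `(id ⊗ R)` of a channel `R : Y → W` on a joint distribution on `X × Y`. -/
def applyChan {X Y W : Type*} [Fintype Y] (R : Y → W → ℝ) (P : X × Y → ℝ) : X × W → ℝ :=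
  fun t => ∑ y, P (t.1, y) * R y t.2

/-- Action of a channel `R : Y → W` on a distribution on `Y`. -/
def chanOnDist {Y W : Type*} [Fintype Y] (R : Y → W → ℝ) (q : Y → ℝ) : W → ℝ :=
  fun w => ∑ y, q y * R y w

/-- Marginal channel `R_{Y→Y}(y'|y) = Σ_{z'} R(y',z'|y)`. -/
def margChan {Y Y' Z' : Type*} [Fintype Z'] (R : Y → Y' × Z' → ℝ) : Y → Y' → ℝ :=
  fun y y' => ∑ z', R y (y', z')

end CIT
noncomputable section
namespace CITAux

lemma sum_ite_left (n : ℕ) (x : Fin n) (a b : ℝ) :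
    ∑ z : Fin n, (if x = z then a else b) = a + ((n:ℝ)-1)*b := by
  have h : ∀ z : Fin n, (if x = z then a else b) = b + (if x = z then a - b else 0) := by
    intro z; by_cases h : x = z <;> simp [h]
  simp_rw [h, Finset.sum_add_distrib, Finset.sum_const, Finset.sum_ite_eq,
    Finset.mem_univ, if_true, Finset.card_univ, Fintype.card_fin, nsmul_eq_mul]
  ring

lemma sum_ite_right (n : ℕ) (z : Fin n) (a b : ℝ) :
    ∑ x : Fin n, (if x = z then a else b) = a + ((n:ℝ)-1)*b := by
  have h : ∀ x : Fin n, (if x = z then a else b) = (if z = x then a else b) := by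
    intro x; simp [eq_comm]
  simp_rw [h]; exact sum_ite_left n z a b

def Pd (n : ℕ) : Fin n × Fin 1 × Fin n → ℝ :=
  fun s => if s.1 = s.2.2 then 1/(2*(n:ℝ)) else 1/(2*(n:ℝ)*((n:ℝ)-1))

def Rc (n : ℕ) : Fin 1 → Fin 1 × Fin n → ℝ := fun _ _ => 1/(n:ℝ)

variable {n : ℕ}

lemma hNr (hn : 2 ≤ n) : (2:ℝ) ≤ (n:ℝ) := by exact_mod_cast hn

lemma Pd_pos (hn : 2 ≤ n) (s : Fin n × Fin 1 × Fin n) : 0 < Pd n s := by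
  have h0 := hNr hn
  unfold Pd; split
  · positivity
  · have : (0:ℝ) < (n:ℝ) - 1 := by linarith
    positivity

lemma inner_sum (hn : 2 ≤ n) (x : Fin n) (y : Fin 1) : ∑ z, Pd n (x, y, z) = 1/(n:ℝ) := by
  have hN := hNr hn
  have h0 : (n:ℝ) ≠ 0 := by linarith
  have h1 : (n:ℝ) - 1 ≠ 0 := by linarith
  unfold Pd
  simp only
  rw [sum_ite_left]
  field_simp
  ring

open CIT

lemma margXY_eq (hn : 2 ≤ n) (t : Fin n × Fin 1) : margXY (Pd n) t = 1/(n:ℝ) := by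
  unfold margXY; exact inner_sum hn t.1 t.2

lemma margYZ_eq (hn : 2 ≤ n) (t : Fin 1 × Fin n) : margYZ (Pd n) t = 1/(n:ℝ) := by
  have hN := hNr hn
  have h0 : (n:ℝ) ≠ 0 := by linarith
  have h1 : (n:ℝ) - 1 ≠ 0 := by linarith
  unfold margYZ Pd
  simp only
  rw [sum_ite_right]
  field_simp
  ring

lemma margY_eq (hn : 2 ≤ n) (y : Fin 1) : margY (Pd n) y = 1 := by
  have h0 : (n:ℝ) ≠ 0 := by have := hNr hn; linarith
  unfold margY
  simp_rw [inner_sum hn _ y, Finset.sum_const, Finset.card_univ, Fintype.card_fin,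
    nsmul_eq_mul]
  field_simp

lemma Pd_isDist (hn : 2 ≤ n) : IsDist (Pd n) := by
  constructor
  · intro s; exact (Pd_pos hn s).le
  · rw [Fintype.sum_prod_type]
    have : ∀ x : Fin n, ∑ p : Fin 1 × Fin n, Pd n (x, p) = 1/(n:ℝ) := by
      intro x
      rw [Fintype.sum_prod_type, Fin.sum_univ_one]
      exact inner_sum hn x 0
    simp_rw [this, Finset.sum_const, Finset.card_univ, Fintype.card_fin, nsmul_eq_mul]
    have h0 : (n:ℝ) ≠ 0 := by have := hNr hn; linarith
    field_simp

lemma Rc_isChannel (hn : 2 ≤ n) : IsChannel (Rc n) := by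
  intro y
  have h0 : (n:ℝ) ≠ 0 := by have := hNr hn; linarith
  constructor
  · intro w; unfold Rc; positivity
  · unfold Rc
    rw [Finset.sum_const, Finset.card_univ, Fintype.card_prod, Fintype.card_fin,
      Fintype.card_fin, nsmul_eq_mul]
    push_cast
    field_simp

lemma chan_recovers (hn : 2 ≤ n) : chanOnDist (Rc n) (margY (Pd n)) = margYZ (Pd n) := by
  funext t
  unfold chanOnDist Rc
  rw [Fin.sum_univ_one, margY_eq hn, margYZ_eq hn]
  ring

lemma applyChan_eq (hn : 2 ≤ n) :
    applyChan (Rc n) (margXY (Pd n)) = fun _ : Fin n × Fin 1 × Fin n => 1/(n:ℝ)^2 := by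
  funext t
  unfold applyChan Rc
  rw [Fin.sum_univ_one, margXY_eq hn]
  ring

lemma dMax_eq (hn : 2 ≤ n) :
    dMax (applyChan (Rc n) (margXY (Pd n))) (Pd n)
      = ((Real.logb 2 (2*((n:ℝ)-1)/(n:ℝ)) : ℝ) : EReal) := by
  have hN := hNr hn
  have h0 : (n:ℝ) ≠ 0 := by linarith
  have h0' : (0:ℝ) < n := by linarith
  have h1 : (n:ℝ) - 1 ≠ 0 := by linarith
  rw [applyChan_eq hn]
  have hsupp : suppLe (fun _ : Fin n × Fin 1 × Fin n => 1/(n:ℝ)^2) (Pd n) :=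
    fun s _ => (Pd_pos hn s).ne'
  rw [dMax, if_pos hsupp]
  have hq : (1:ℝ)/(n:ℝ)^2 ≠ 0 := by positivity
  have hS : {r : ℝ | ∃ s : Fin n × Fin 1 × Fin n, (1:ℝ)/(n:ℝ)^2 ≠ 0 ∧ r = (1/(n:ℝ)^2) / Pd n s}
      = {2/(n:ℝ), 2*((n:ℝ)-1)/(n:ℝ)} := by
    ext r
    constructor
    · rintro ⟨s, -, rfl⟩
      by_cases h : s.1 = s.2.2
      · left; simp only [Pd, h, if_true]; field_simp
      · right; rw [Set.mem_singleton_iff]; simp only [Pd, h, if_false]; field_simp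
    · rintro (rfl | rfl)
      · exact ⟨(⟨0, by omega⟩, 0, ⟨0, by omega⟩), hq, by
          simp only [Pd, if_pos rfl, ↓reduceIte]; field_simp⟩
      · refine ⟨(⟨0, by omega⟩, 0, ⟨1, by omega⟩), hq, ?_⟩
        have hne : (⟨0, by omega⟩ : Fin n) ≠ ⟨1, by omega⟩ := by
          simp [Fin.ext_iff]
        simp only [Pd, if_neg hne]; field_simp
  rw [hS, csSup_pair, sup_eq_right.mpr]
  rw [div_le_div_iff₀ h0' h0']
  nlinarith

lemma cmi_eq (hn : 2 ≤ n) :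
    cmi (Pd n) = 1/2 * Real.logb 2 ((n:ℝ)/2)
      + 1/2 * Real.logb 2 ((n:ℝ)/(2*((n:ℝ)-1))) := by
  have hN := hNr hn
  have h0 : (n:ℝ) ≠ 0 := by linarith
  have h1 : (n:ℝ) - 1 ≠ 0 := by linarith
  unfold cmi
  have hterm : ∀ s : Fin n × Fin 1 × Fin n,
      Pd n s * Real.logb 2 (Pd n s * margY (Pd n) s.2.1 /
        (margXY (Pd n) (s.1, s.2.1) * margYZ (Pd n) (s.2.1, s.2.2)))
      = if s.1 = s.2.2 then (1/(2*(n:ℝ))) * Real.logb 2 ((n:ℝ)/2)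
        else (1/(2*(n:ℝ)*((n:ℝ)-1))) * Real.logb 2 ((n:ℝ)/(2*((n:ℝ)-1))) := by
    intro s
    rw [margY_eq hn, margXY_eq hn, margYZ_eq hn]
    by_cases h : s.1 = s.2.2
    · simp only [Pd, h, if_true]
      congr 2
      field_simp
    · simp only [Pd, h, if_false]
      congr 2
      field_simp
  simp_rw [hterm]
  rw [Fintype.sum_prod_type]
  simp_rw [Fintype.sum_prod_type, Fin.sum_univ_one, sum_ite_left, Finset.sum_const,
    Finset.card_univ, Fintype.card_fin, nsmul_eq_mul]
  field_simp

end CITAux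

open CIT CITAux in
/-- for every constant `κ` there is a tripartite distribution
`P` and a channel `R` from `Y` to `Y×Z` with `R(P_Y) = P_YZ` such that
`κ · D_max((id⊗R)(P_XY) ‖ P) < I(X:Z|Y)_P`. -/
theorem large_cmi_good_recovery_swapped (κ : ℝ) :
    ∃ (nx ny nz : ℕ) (P : Fin nx × Fin ny × Fin nz → ℝ)
      (R : Fin ny → Fin ny × Fin nz → ℝ),
      IsDist P ∧ IsChannel R ∧ chanOnDist R (margY P) = margYZ P ∧
        (κ : EReal) * dMax (applyChan R (margXY P)) P < ((cmi P : ℝ) : EReal) := by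
  set m : ℕ := 2 * ⌈|κ|⌉₊ + 4 with hm
  set n : ℕ := 2 ^ m with hdefn
  have hn : 2 ≤ n := by
    calc 2 = 2^1 := by norm_num
    _ ≤ 2^m := Nat.pow_le_pow_right (by norm_num) (by omega)
  have hN : (2:ℝ) ≤ (n:ℝ) := by exact_mod_cast hn
  have h0 : (0:ℝ) < (n:ℝ) := by linarith
  have h1 : (0:ℝ) < (n:ℝ) - 1 := by linarith
  refine ⟨n, 1, n, Pd n, Rc n, Pd_isDist hn, Rc_isChannel hn, chan_recovers hn, ?_⟩
  rw [dMax_eq hn, ← EReal.coe_mul, EReal.coe_lt_coe_iff]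
  set d : ℝ := Real.logb 2 (2*((n:ℝ)-1)/(n:ℝ)) with hd
  have hd0 : 0 ≤ d := by
    apply Real.logb_nonneg (by norm_num)
    rw [le_div_iff₀ h0]; linarith
  have hd1 : d ≤ 1 := by
    have : d ≤ Real.logb 2 2 := by
      apply (Real.logb_le_logb (by norm_num) (by positivity) (by norm_num)).mpr
      rw [div_le_iff₀ h0]; linarith
    rwa [Real.logb_self_eq_one (by norm_num)] at this
  have hκd : κ * d ≤ |κ| := by
    calc κ * d ≤ |κ| * d := mul_le_mul_of_nonneg_right (le_abs_self κ) hd0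
    _ ≤ |κ| * 1 := mul_le_mul_of_nonneg_left hd1 (abs_nonneg κ)
    _ = |κ| := mul_one _
  have hlogn : Real.logb 2 (n:ℝ) = m := by
    rw [hdefn]; push_cast
    rw [Real.logb_pow, Real.logb_self_eq_one (by norm_num), mul_one, hm]
  have hcmi : (⌈|κ|⌉₊ : ℝ) + 1 ≤ cmi (Pd n) := by
    rw [cmi_eq hn]
    have e1 : Real.logb 2 ((n:ℝ)/2) = (m:ℝ) - 1 := by
      rw [Real.logb_div (by linarith) (by norm_num), hlogn,
        Real.logb_self_eq_one (by norm_num)]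
    have e2 : (-1:ℝ) ≤ Real.logb 2 ((n:ℝ)/(2*((n:ℝ)-1))) := by
      have h12 : Real.logb 2 (1/2 : ℝ) = -1 := by
        rw [Real.logb_div (by norm_num) (by norm_num),
          Real.logb_self_eq_one (by norm_num)]
        simp
      rw [← h12]
      apply (Real.logb_le_logb (by norm_num) (by norm_num) (by positivity)).mpr
      rw [div_le_div_iff₀ (by norm_num) (by positivity)]
      linarith
    rw [e1]
    have hmk : ((m:ℝ) - 1) / 2 - 1/2 = (⌈|κ|⌉₊ : ℝ) + 1 := by
      rw [hm]; push_cast; ring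
    nlinarith
  have : |κ| < cmi (Pd n) := by
    have := Nat.le_ceil |κ|
    linarith
  linarith
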